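/- Let V₀ be a d×d positive definite real matrix and a₁,…,aₙ ∈ ℝ^d with ‖aₜ‖₂ ≤ L for all t, and Vₙ = V₀ + Σ_{s=1}^n aₛaₛᵀ. Then 2 log(det Vₙ / det V₀) ≤ 2d log((Tr(V₀) + n L²) / (d · det(V₀)^{1/d})). -/

import Mathlib

open Matrix Finset

lemma posSemidef_vecMulVec_real {d : ℕ} (a : Fin d → ℝ) :
    (vecMulVec a a).PosSemidef := by
  rw [Matrix.posSemidef_iff_dotProduct_mulVec]
  constructor
  · ext i j
    simp [vecMulVec_apply, Matrix.conjTranspose_apply, mul_comm]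
  · intro x
    have : (star x) ⬝ᵥ (vecMulVec a a *ᵥ x) = (a ⬝ᵥ x) * (a ⬝ᵥ x) := by
      simp [vecMulVec_apply, dotProduct, mulVec, Finset.mul_sum, Finset.sum_mul, mul_assoc,
        mul_comm, mul_left_comm]
    rw [this]
    exact mul_self_nonneg _

lemma trace_eq_sum_eigenvalues_real {d : ℕ} {A : Matrix (Fin d) (Fin d) ℝ}
    (hA : A.IsHermitian) : A.trace = ∑ i, hA.eigenvalues i := by
  conv_lhs => rw [hA.spectral_theorem, Unitary.conjStarAlgAut_apply]
  rw [Matrix.trace_mul_cycle]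
  rw [(Matrix.mem_unitaryGroup_iff').mp (Matrix.IsHermitian.eigenvectorUnitary hA).2, one_mul]
  simp [Matrix.trace_diagonal]


/-- Determinant–trace bound in the elliptical potential lemma: with
`Vₙ = V₀ + Σ_{s=1}^n aₛaₛᵀ`, `V₀` positive definite, and `‖aₛ‖₂ ≤ L`,
`2 log(det Vₙ / det V₀) ≤ 2 d log((Tr V₀ + n L²) / (d · det(V₀)^{1/d}))`. -/
theorem elliptical_potential_det_trace {d n : ℕ} (V₀ : Matrix (Fin d) (Fin d) ℝ)
    (hV₀ : V₀.PosDef) (a : ℕ → (Fin d → ℝ)) (L : ℝ)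
    (hL : ∀ t < n, Real.sqrt (∑ i, (a t i) ^ 2) ≤ L)
    (Vₙ : Matrix (Fin d) (Fin d) ℝ)
    (hVₙ : Vₙ = V₀ + ∑ s ∈ Finset.range n, vecMulVec (a s) (a s)) :
    2 * Real.log (Vₙ.det / V₀.det) ≤
      2 * d * Real.log ((V₀.trace + n * L ^ 2) / (d * V₀.det ^ (1 / (d : ℝ)))) := by
  rcases Nat.eq_zero_or_pos d with hd | hd
  · subst hd
    have h1 : Vₙ.det = 1 := Matrix.det_fin_zero
    have h2 : V₀.det = 1 := Matrix.det_fin_zero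
    simp [h1, h2]
  have hd0 : (0 : ℝ) < d := by exact_mod_cast hd
  -- positivity of Vₙ
  have hpsd : (∑ s ∈ Finset.range n, vecMulVec (a s) (a s)).PosSemidef :=
    Finset.sum_induction _ _ (fun A B hA hB => hA.add hB) Matrix.PosSemidef.zero
      (fun s _ => posSemidef_vecMulVec_real (a s))
  have hVpd : Vₙ.PosDef := hVₙ ▸ hV₀.add_posSemidef hpsd
  have hherm := hVpd.isHermitian
  set lam := hherm.eigenvalues with hlam
  have hlampos : ∀ i, 0 < lam i := hVpd.eigenvalues_pos
  have htr : Vₙ.trace = ∑ i, lam i := trace_eq_sum_eigenvalues_real hherm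
  have hdet : Vₙ.det = ∏ i, lam i := by
    simpa using hherm.det_eq_prod_eigenvalues
  have htrpos : 0 < Vₙ.trace := by
    rw [htr]
    exact Finset.sum_pos (fun i _ => hlampos i) (by simp [Finset.univ_nonempty_iff, Fin.pos_iff_nonempty.mp hd])
  -- trace bound
  have htrbound : Vₙ.trace ≤ V₀.trace + n * L ^ 2 := by
    rw [hVₙ, Matrix.trace_add, Matrix.trace_sum]
    gcongr V₀.trace + ?_
    calc (∑ s ∈ Finset.range n, (vecMulVec (a s) (a s)).trace)
        = ∑ s ∈ Finset.range n, ∑ i, (a s i) ^ 2 := by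
          refine Finset.sum_congr rfl fun s _ => ?_
          simp [Matrix.trace, Matrix.diag, vecMulVec_apply, sq]
      _ ≤ ∑ s ∈ Finset.range n, L ^ 2 := by
          refine Finset.sum_le_sum fun s hs => ?_
          have h1 : (0:ℝ) ≤ ∑ i, (a s i) ^ 2 := Finset.sum_nonneg fun i _ => sq_nonneg _
          have h2 := hL s (Finset.mem_range.mp hs)
          calc ∑ i, (a s i) ^ 2 = (Real.sqrt (∑ i, (a s i) ^ 2)) ^ 2 := (Real.sq_sqrt h1).symm
            _ ≤ L ^ 2 := by
                have := Real.sqrt_nonneg (∑ i, (a s i) ^ 2)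
                nlinarith
      _ = n * L ^ 2 := by simp [mul_comm]
  have hT : (0:ℝ) < V₀.trace + n * L ^ 2 := lt_of_lt_of_le htrpos htrbound
  -- AM-GM: log det Vₙ ≤ d * log (trace Vₙ / d)
  set μ := Vₙ.trace / d with hμ
  have hμpos : 0 < μ := div_pos htrpos hd0
  have hkey : Real.log Vₙ.det ≤ d * Real.log μ := by
    rw [hdet, Real.log_prod (fun i _ => (hlampos i).ne')]
    have hstep : ∀ i, Real.log (lam i) ≤ Real.log μ + (lam i - μ) / μ := by
      intro i
      have h1 : Real.log (lam i / μ) ≤ lam i / μ - 1 :=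
        Real.log_le_sub_one_of_pos (div_pos (hlampos i) hμpos)
      rw [Real.log_div (hlampos i).ne' hμpos.ne'] at h1
      have : lam i / μ - 1 = (lam i - μ) / μ := by field_simp
      linarith [this ▸ h1]
    calc (∑ i, Real.log (lam i)) ≤ ∑ i, (Real.log μ + (lam i - μ) / μ) :=
          Finset.sum_le_sum fun i _ => hstep i
      _ = d * Real.log μ + ((∑ i, lam i) - d * μ) / μ := by
          rw [Finset.sum_add_distrib, ← Finset.sum_div, Finset.sum_sub_distrib]
          simp [mul_comm]
      _ = d * Real.log μ := by
          rw [hμ, ← htr]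
          field_simp
          simp
  -- assemble
  have hdetV₀ : 0 < V₀.det := hV₀.det_pos
  have hdetVₙ : 0 < Vₙ.det := hVpd.det_pos
  have hrpow : Real.log (V₀.det ^ (1 / (d:ℝ))) = (1 / d) * Real.log V₀.det :=
    Real.log_rpow hdetV₀ _
  have hlogμ : Real.log μ ≤ Real.log ((V₀.trace + n * L ^ 2) / d) := by
    apply Real.log_le_log hμpos
    rw [hμ]
    gcongr
  have e1 : Real.log (Vₙ.det / V₀.det) = Real.log Vₙ.det - Real.log V₀.det :=
    Real.log_div hdetVₙ.ne' hdetV₀.ne'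
  have e2 : Real.log ((V₀.trace + n * L ^ 2) / (d * V₀.det ^ (1 / (d:ℝ))))
      = Real.log (V₀.trace + n * L ^ 2) - Real.log d - (1/d) * Real.log V₀.det := by
    rw [Real.log_div hT.ne' (by positivity), Real.log_mul hd0.ne' (by positivity), hrpow]
    ring
  have e3 : Real.log ((V₀.trace + n * L ^ 2) / d)
      = Real.log (V₀.trace + n * L ^ 2) - Real.log d :=
    Real.log_div hT.ne' hd0.ne'
  have hfin : Real.log Vₙ.det ≤ d * (Real.log (V₀.trace + n * L ^ 2) - Real.log d) := by
    calc Real.log Vₙ.det ≤ d * Real.log μ := hkey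
      _ ≤ d * (Real.log (V₀.trace + n * L ^ 2) - Real.log d) := by
          rw [← e3]; exact mul_le_mul_of_nonneg_left hlogμ hd0.le
  rw [e1, e2]
  have expand : 2*(d:ℝ)*(Real.log (V₀.trace + n * L ^ 2) - Real.log d - (1/d)*Real.log V₀.det)
      = 2*((d:ℝ)*(Real.log (V₀.trace + n * L ^ 2) - Real.log d)) - 2*Real.log V₀.det := by
    field_simp
  rw [expand]
  linarith
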